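/- arXiv:1808.04523 — 6 statements merged into one kernel-verified Lean document; each statement's English description precedes it below -/
import Mathlib

section
/- Let f:[0,1]→ℝ be convex, let [t₁,t₂]⊆[0,1] with t₁<t₂, and let x,z ∈ (t₁,t₂). Then Sec[f,[t₁,t₂]](x) − f(x) ≥ (Sec[f,[t₁,t₂]](z) − f(z)) · min{(t₂−x)/(t₂−z), (x−t₁)/(z−t₁)}. -/
noncomputable def Sec (f : ℝ → ℝ) (a b x : ℝ) : ℝ :=
  ((b - x) / (b - a)) * f a + ((x - a) / (b - a)) * f b

private lemma key_left (f : ℝ → ℝ)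
    (hf : ConvexOn ℝ (Set.Icc (0:ℝ) 1) f)
    (t₁ t₂ : ℝ) (h0 : 0 ≤ t₁) (h12 : t₁ < t₂) (h1 : t₂ ≤ 1)
    (x z : ℝ) (hx : x ∈ Set.Ioo t₁ t₂) (hz : z ∈ Set.Ioo t₁ t₂) (hxz : x ≤ z) :
    Sec f t₁ t₂ x - f x ≥ (Sec f t₁ t₂ z - f z) * ((x - t₁) / (z - t₁)) := by
  obtain ⟨hx1, hx2⟩ := hx
  obtain ⟨hz1, hz2⟩ := hz
  have hd : (0:ℝ) < z - t₁ := by linarith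
  have hD : (0:ℝ) < t₂ - t₁ := by linarith
  set a := (z - x) / (z - t₁) with ha_def
  set b := (x - t₁) / (z - t₁) with hb_def
  have ha : 0 ≤ a := div_nonneg (by linarith) hd.le
  have hb : 0 ≤ b := div_nonneg (by linarith) hd.le
  have hab : a + b = 1 := by rw [ha_def, hb_def]; field_simp; ring
  have hmem₁ : t₁ ∈ Set.Icc (0:ℝ) 1 := ⟨h0, by linarith⟩
  have hmemz : z ∈ Set.Icc (0:ℝ) 1 := ⟨by linarith, by linarith⟩
  have hcomb : a • t₁ + b • z = x := by
    simp only [smul_eq_mul, ha_def, hb_def]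
    field_simp
    ring
  have hconv : f x ≤ a * f t₁ + b * f z := by
    have := hf.2 hmem₁ hmemz ha hb hab
    rw [hcomb] at this
    simpa [smul_eq_mul] using this
  have hsec : Sec f t₁ t₂ x = a * f t₁ + b * Sec f t₁ t₂ z := by
    simp only [Sec, ha_def, hb_def]
    field_simp
    ring
  nlinarith [hconv, hsec]

private lemma key_right (f : ℝ → ℝ)
    (hf : ConvexOn ℝ (Set.Icc (0:ℝ) 1) f)
    (t₁ t₂ : ℝ) (h0 : 0 ≤ t₁) (h12 : t₁ < t₂) (h1 : t₂ ≤ 1)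
    (x z : ℝ) (hx : x ∈ Set.Ioo t₁ t₂) (hz : z ∈ Set.Ioo t₁ t₂) (hxz : z ≤ x) :
    Sec f t₁ t₂ x - f x ≥ (Sec f t₁ t₂ z - f z) * ((t₂ - x) / (t₂ - z)) := by
  obtain ⟨hx1, hx2⟩ := hx
  obtain ⟨hz1, hz2⟩ := hz
  have hd : (0:ℝ) < t₂ - z := by linarith
  have hD : (0:ℝ) < t₂ - t₁ := by linarith
  set a := (t₂ - x) / (t₂ - z) with ha_def
  set b := (x - z) / (t₂ - z) with hb_def
  have ha : 0 ≤ a := div_nonneg (by linarith) hd.le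
  have hb : 0 ≤ b := div_nonneg (by linarith) hd.le
  have hab : a + b = 1 := by rw [ha_def, hb_def]; field_simp; ring
  have hmemz : z ∈ Set.Icc (0:ℝ) 1 := ⟨by linarith, by linarith⟩
  have hmem₂ : t₂ ∈ Set.Icc (0:ℝ) 1 := ⟨by linarith, h1⟩
  have hcomb : a • z + b • t₂ = x := by
    simp only [smul_eq_mul, ha_def, hb_def]
    field_simp
    ring
  have hconv : f x ≤ a * f z + b * f t₂ := by
    have := hf.2 hmemz hmem₂ ha hb hab
    rw [hcomb] at this
    simpa [smul_eq_mul] using this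
  have hsec : Sec f t₁ t₂ x = a * Sec f t₁ t₂ z + b * f t₂ := by
    simp only [Sec, ha_def, hb_def]
    field_simp
    ring
  nlinarith [hconv, hsec]

theorem secant_gap_comparison (f : ℝ → ℝ)
    (hf : ConvexOn ℝ (Set.Icc (0:ℝ) 1) f)
    (t₁ t₂ : ℝ) (h0 : 0 ≤ t₁) (h12 : t₁ < t₂) (h1 : t₂ ≤ 1)
    (x z : ℝ) (hx : x ∈ Set.Ioo t₁ t₂) (hz : z ∈ Set.Ioo t₁ t₂) :
    Sec f t₁ t₂ x - f x ≥
      (Sec f t₁ t₂ z - f z) * min ((t₂ - x) / (t₂ - z)) ((x - t₁) / (z - t₁)) := by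
  obtain ⟨hz1, hz2⟩ := hz
  have hz' : z ∈ Set.Ioo t₁ t₂ := ⟨hz1, hz2⟩
  have hD : (0:ℝ) < t₂ - t₁ := by linarith
  have hgapz : 0 ≤ Sec f t₁ t₂ z - f z := by
    have ha : 0 ≤ (t₂ - z) / (t₂ - t₁) := div_nonneg (by linarith) hD.le
    have hb : 0 ≤ (z - t₁) / (t₂ - t₁) := div_nonneg (by linarith) hD.le
    have hab : (t₂ - z) / (t₂ - t₁) + (z - t₁) / (t₂ - t₁) = 1 := by field_simp; ring
    have hconv := hf.2 (Set.mem_Icc.2 ⟨h0, by linarith⟩)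
      (Set.mem_Icc.2 ⟨by linarith, h1⟩) ha hb hab
    have hcomb : ((t₂ - z) / (t₂ - t₁)) • t₁ + ((z - t₁) / (t₂ - t₁)) • t₂ = z := by
      simp only [smul_eq_mul]; field_simp; ring
    rw [hcomb] at hconv
    simp only [smul_eq_mul, Sec] at hconv ⊢
    linarith
  rcases le_total x z with h | h
  · have hkey := key_left f hf t₁ t₂ h0 h12 h1 x z hx hz' h
    have hmin : min ((t₂ - x) / (t₂ - z)) ((x - t₁) / (z - t₁)) ≤ (x - t₁) / (z - t₁) :=
      min_le_right _ _
    calc (Sec f t₁ t₂ z - f z) * min ((t₂ - x) / (t₂ - z)) ((x - t₁) / (z - t₁))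
        ≤ (Sec f t₁ t₂ z - f z) * ((x - t₁) / (z - t₁)) :=
          mul_le_mul_of_nonneg_left hmin hgapz
      _ ≤ Sec f t₁ t₂ x - f x := hkey
  · have hkey := key_right f hf t₁ t₂ h0 h12 h1 x z hx hz' h
    have hmin : min ((t₂ - x) / (t₂ - z)) ((x - t₁) / (z - t₁)) ≤ (t₂ - x) / (t₂ - z) :=
      min_le_left _ _
    calc (Sec f t₁ t₂ z - f z) * min ((t₂ - x) / (t₂ - z)) ((x - t₁) / (z - t₁))
        ≤ (Sec f t₁ t₂ z - f z) * ((t₂ - x) / (t₂ - z)) :=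
          mul_le_mul_of_nonneg_left hmin hgapz
      _ ≤ Sec f t₁ t₂ x - f x := hkey
end

section
/- Let f:[0,1]→ℝ be convex and differentiable, and fix x∈[0,1]. Then the function t ↦ Δ(f,x+t,t) := (f(x)+f(x+2t))/2 − f(x+t) is non-decreasing on {t ≥ 0 : x+2t ≤ 1}. -/
theorem delta_monotone_left_endpoint_fixed (f : ℝ → ℝ)
    (hf : ConvexOn ℝ (Set.Icc (0:ℝ) 1) f)
    (hdiff : DifferentiableOn ℝ f (Set.Icc (0:ℝ) 1))
    (x : ℝ) (hx : x ∈ Set.Icc (0:ℝ) 1) :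
    ∀ s t : ℝ, 0 ≤ s → s ≤ t → x + 2 * t ≤ 1 →
      (f x + f (x + 2 * s)) / 2 - f (x + s) ≤
        (f x + f (x + 2 * t)) / 2 - f (x + t) := by
  intro s t hs hst h1t
  rcases eq_or_lt_of_le hst with rfl | hst
  · exact le_refl _
  obtain ⟨hx0, hx1⟩ := hx
  have ha : x + s ∈ Set.Icc (0:ℝ) 1 := ⟨by linarith, by linarith⟩
  have hb : x + t ∈ Set.Icc (0:ℝ) 1 := ⟨by linarith, by linarith⟩
  have hc : x + 2 * s ∈ Set.Icc (0:ℝ) 1 := ⟨by linarith, by linarith⟩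
  have hd : x + 2 * t ∈ Set.Icc (0:ℝ) 1 := ⟨by linarith, by linarith⟩
  -- slope from a = x+s : slope(a,b) ≤ slope(a,d)
  have h1 : (f (x + t) - f (x + s)) / ((x + t) - (x + s)) ≤
      (f (x + 2 * t) - f (x + s)) / ((x + 2 * t) - (x + s)) :=
    hf.secant_mono ha hb hd (by intro h; have := add_left_cancel h; linarith)
      (by intro h; have := add_left_cancel h; linarith) (by linarith)
  -- slope from d = x+2t : slope(a,d) ≤ slope(c,d)
  have h2 : (f (x + s) - f (x + 2 * t)) / ((x + s) - (x + 2 * t)) ≤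
      (f (x + 2 * s) - f (x + 2 * t)) / ((x + 2 * s) - (x + 2 * t)) :=
    hf.secant_mono hd ha hc (by intro h; have := add_left_cancel h; linarith)
      (by intro h; have := add_left_cancel h; linarith) (by linarith)
  rw [show (x + s) - (x + 2 * t) = -((x + 2 * t) - (x + s)) by ring,
      show f (x + s) - f (x + 2 * t) = -(f (x + 2 * t) - f (x + s)) by ring,
      show (x + 2 * s) - (x + 2 * t) = -((x + 2 * t) - (x + 2 * s)) by ring,
      show f (x + 2 * s) - f (x + 2 * t) = -(f (x + 2 * t) - f (x + 2 * s)) by ring,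
      neg_div_neg_eq, neg_div_neg_eq] at h2
  have k1 : (f (x + t) - f (x + s)) * ((x + 2 * t) - (x + s)) ≤
      (f (x + 2 * t) - f (x + s)) * ((x + t) - (x + s)) := by
    rw [div_le_div_iff₀ (by linarith) (by linarith)] at h1; exact h1
  have k2 : (f (x + 2 * t) - f (x + s)) * ((x + 2 * t) - (x + 2 * s)) ≤
      (f (x + 2 * t) - f (x + 2 * s)) * ((x + 2 * t) - (x + s)) := by
    rw [div_le_div_iff₀ (by linarith) (by linarith)] at h2; exact h2
  have hpos : (0:ℝ) < (x + 2 * t) - (x + s) := by linarith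
  nlinarith [k1, k2, hpos]
end

section
/- Let f:[0,1]→ℝ be convex, and suppose [x−t,x+t]⊆[0,1] with t>0 and Δ(f,x,t) := (f(x−t)+f(x+t))/2 − f(x) ≥ ε > 0. Then for every τ with |τ| ≤ t and [x+τ−(t+|τ|), x+τ+(t+|τ|)] ⊆ [0,1], it holds that Δ(f, x+τ, t+|τ|) ≥ ε·(1 − |τ|/t). -/
noncomputable def Δ (f : ℝ → ℝ) (x t : ℝ) : ℝ := (f (x - t) + f (x + t)) / 2 - f x

private lemma convex_comb_aux {f : ℝ → ℝ} (hf : ConvexOn ℝ (Set.Icc (0:ℝ) 1) f)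
    {p q : ℝ} (hp : p ∈ Set.Icc (0:ℝ) 1) (hq : q ∈ Set.Icc (0:ℝ) 1)
    (u : ℝ) (hu0 : 0 ≤ u) (hu1 : u ≤ 1) :
    f ((1-u)*p + u*q) ≤ (1-u)*f p + u*f q := by
  have h1 : (0:ℝ) ≤ 1 - u := by linarith
  have hsum : (1-u) + u = (1:ℝ) := by ring
  simpa [smul_eq_mul] using hf.2 hp hq h1 hu0 hsum

theorem delta_shifted_lower_bound (f : ℝ → ℝ)
    (hf : ConvexOn ℝ (Set.Icc (0:ℝ) 1) f)
    (x t ε : ℝ) (ht : 0 < t) (hsub : Set.Icc (x - t) (x + t) ⊆ Set.Icc 0 1)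
    (hε : 0 < ε) (hΔ : ε ≤ Δ f x t) :
    ∀ τ : ℝ, |τ| ≤ t →
      Set.Icc (x + τ - (t + |τ|)) (x + τ + (t + |τ|)) ⊆ Set.Icc 0 1 →
      ε * (1 - |τ| / t) ≤ Δ f (x + τ) (t + |τ|) := by
  intro τ hτ hsub2
  have hx : x ∈ Set.Icc (0:ℝ) 1 := hsub ⟨by linarith, by linarith⟩
  rw [Δ] at hΔ
  have habs : 0 ≤ |τ| := abs_nonneg τ
  have hfrac : 0 ≤ ε * (|τ| / t) := mul_nonneg hε.le (div_nonneg habs ht.le)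
  have hsplit : ε * (1 - |τ| / t) = ε - ε * (|τ| / t) := by ring
  rcases le_or_gt 0 τ with h0 | h0
  · rw [abs_of_nonneg h0] at hτ hsub2 hfrac hsplit ⊢
    have hb : x + t + 2*τ ∈ Set.Icc (0:ℝ) 1 :=
      hsub2 ⟨by linarith, by linarith⟩
    have hd : (0:ℝ) < t + 2*τ := by linarith
    set u : ℝ := τ / (t + 2*τ) with hu
    have hu0 : 0 ≤ u := div_nonneg h0 hd.le
    have hu2 : u ≤ 1/2 := (div_le_iff₀ hd).mpr (by linarith)
    have hus : u * (t + 2*τ) = τ := div_mul_cancel₀ τ hd.ne'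
    have I1 : f (x + τ) ≤ (1-u) * f x + u * f (x + t + 2*τ) := by
      have h := convex_comb_aux hf hx hb u hu0 (by linarith)
      have hpt1 : (1-u)*x + u*(x + t + 2*τ) = x + τ := by linear_combination hus
      rwa [hpt1] at h
    have I2 : f (x + t) ≤ (1-(1-2*u)) * f x + (1-2*u) * f (x + t + 2*τ) := by
      have h := convex_comb_aux hf hx hb (1-2*u) (by linarith) (by linarith)
      have hpt2 : (1-(1-2*u))*x + (1-2*u)*(x + t + 2*τ) = x + t := by
        linear_combination (-2 : ℝ) * hus
      rwa [hpt2] at h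
    have e1 : x + τ - (t + τ) = x - t := by ring
    have e2 : x + τ + (t + τ) = x + t + 2*τ := by ring
    rw [Δ, e1, e2]
    nlinarith [I1, I2, hΔ]
  · rw [abs_of_neg h0] at hτ hsub2 hfrac hsplit ⊢
    have ha : x - t + 2*τ ∈ Set.Icc (0:ℝ) 1 :=
      hsub2 ⟨by linarith, by linarith⟩
    have hd : (0:ℝ) < t - 2*τ := by linarith
    set u : ℝ := -τ / (t - 2*τ) with hu
    have hu0 : 0 ≤ u := div_nonneg (by linarith) hd.le
    have hu2 : u ≤ 1/2 := (div_le_iff₀ hd).mpr (by linarith)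
    have hus : u * (t - 2*τ) = -τ := div_mul_cancel₀ (-τ) hd.ne'
    have I1 : f (x + τ) ≤ (1-u) * f x + u * f (x - t + 2*τ) := by
      have h := convex_comb_aux hf hx ha u hu0 (by linarith)
      have hpt1 : (1-u)*x + u*(x - t + 2*τ) = x + τ := by
        linear_combination (-1 : ℝ) * hus
      rwa [hpt1] at h
    have I2 : f (x - t) ≤ (1-(1-2*u)) * f x + (1-2*u) * f (x - t + 2*τ) := by
      have h := convex_comb_aux hf hx ha (1-2*u) (by linarith) (by linarith)
      have hpt2 : (1-(1-2*u))*x + (1-2*u)*(x - t + 2*τ) = x - t := by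
        linear_combination (2 : ℝ) * hus
      rwa [hpt2] at h
    have e1 : x + τ - (t + -τ) = x - t + 2*τ := by ring
    have e2 : x + τ + (t + -τ) = x + t := by ring
    rw [Δ, e1, e2]
    nlinarith [I1, I2, hΔ]
end

section
/- Let f, f⋆ : [0,1]→ℝ and let I=[a,b]⊆[0,1] with midpoint m. Suppose |f(a)−f⋆(a)| < ε, |f(b)−f⋆(b)| < ε, |f(m)−f⋆(m)| < ε, f and f⋆ are convex, and Δ(f⋆,I) ≤ ε. Then for every z∈I, |f(z)−f⋆(z)| < 9ε. -/
lemma secant_sandwich_aux (g : ℝ → ℝ) (a b : ℝ) (h0 : 0 ≤ a) (hab : a < b)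
    (h1 : b ≤ 1) (hg : ConvexOn ℝ (Set.Icc (0:ℝ) 1) g) (z : ℝ)
    (hz : z ∈ Set.Icc a b) :
    g z ≤ g a + (z - a) / (b - a) * (g b - g a) ∧
    g a + (z - a) / (b - a) * (g b - g a) - g z ≤
      2 * ((g a + g b) / 2 - g ((a + b) / 2)) := by
  obtain ⟨hza, hzb⟩ := hz
  have hba : (0:ℝ) < b - a := by linarith
  have haS : a ∈ Set.Icc (0:ℝ) 1 := ⟨h0, by linarith⟩
  have hbS : b ∈ Set.Icc (0:ℝ) 1 := ⟨by linarith, h1⟩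
  have hzS : z ∈ Set.Icc (0:ℝ) 1 := ⟨by linarith, by linarith⟩
  set t := (z - a) / (b - a) with ht_def
  have ht0 : 0 ≤ t := div_nonneg (by linarith) hba.le
  have ht1 : t ≤ 1 := by
    rw [div_le_one hba]; linarith
  -- part 1
  have hsec : g z ≤ g a + t * (g b - g a) := by
    have h := hg.2 haS hbS (by linarith : (0:ℝ) ≤ 1 - t) ht0 (by ring)
    have hx : (1 - t) • a + t • b = z := by
      rw [smul_eq_mul, smul_eq_mul, ht_def]
      field_simp
      ring
    rw [hx] at h
    simp only [smul_eq_mul] at h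
    linarith
  refine ⟨hsec, ?_⟩
  -- part 2
  set m := (a + b) / 2 with hm_def
  have hmS : m ∈ Set.Icc (0:ℝ) 1 := ⟨by simp [hm_def]; linarith, by simp [hm_def]; linarith⟩
  rcases le_or_gt z m with hzm | hzm
  · -- z in [a, m], use m = s*z + (1-s)*b, s = (b-m)/(b-z)
    have hbz : (0:ℝ) < b - z := by simp [hm_def] at hzm; linarith
    set s := (b - m) / (b - z) with hs_def
    have hs0 : 0 ≤ s := div_nonneg (by simp [hm_def]; linarith) hbz.le
    have hs1 : s ≤ 1 := by rw [div_le_one hbz]; simp [hm_def]; linarith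
    have hshalf : 1 / 2 ≤ s := by
      rw [le_div_iff₀ hbz]; simp [hm_def]; linarith
    have hconv := hg.2 hzS hbS hs0 (by linarith : (0:ℝ) ≤ 1 - s) (by ring)
    have hx : s • z + (1 - s) • b = m := by
      simp only [smul_eq_mul, hs_def, hm_def]
      field_simp
      ring
    rw [hx] at hconv
    simp only [smul_eq_mul] at hconv
    -- affine identity: s * L(z) + (1-s) * L(b) = L(m)
    have haff : s * (g a + t * (g b - g a)) + (1 - s) * g b
        = g a + (m - a) / (b - a) * (g b - g a) := by
      simp only [hs_def, hm_def, ht_def]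
      field_simp
      ring
    have hLm : g a + (m - a) / (b - a) * (g b - g a) = (g a + g b) / 2 := by
      simp only [hm_def]
      field_simp
      ring
    -- Δ ≥ s * h(z)
    have hexp : s * (g a + t * (g b - g a) - g z)
        = s * (g a + t * (g b - g a)) - s * g z := by ring
    have hDz : s * (g a + t * (g b - g a) - g z) ≤ (g a + g b) / 2 - g m := by
      rw [hexp]; linarith [hconv, haff, hLm]
    have hX : (0:ℝ) ≤ g a + t * (g b - g a) - g z := by linarith [hsec]
    have hs2 : (0:ℝ) ≤ s - 1/2 := by linarith
    have key : 0 ≤ (s - 1/2) * (g a + t * (g b - g a) - g z) := mul_nonneg hs2 hX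
    have key' : (s - 1/2) * (g a + t * (g b - g a) - g z)
        = s * (g a + t * (g b - g a) - g z)
          - (1/2) * (g a + t * (g b - g a) - g z) := by ring
    linarith [key, key', hDz]
  · -- z in (m, b], use m = s*z + (1-s)*a, s = (m-a)/(z-a)
    have hza' : (0:ℝ) < z - a := by simp [hm_def] at hzm; linarith
    set s := (m - a) / (z - a) with hs_def
    have hs0 : 0 ≤ s := div_nonneg (by simp [hm_def]; linarith) hza'.le
    have hs1 : s ≤ 1 := by rw [div_le_one hza']; simp [hm_def]; linarith
    have hshalf : 1 / 2 ≤ s := by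
      rw [le_div_iff₀ hza']; simp [hm_def]; linarith
    have hconv := hg.2 hzS haS hs0 (by linarith : (0:ℝ) ≤ 1 - s) (by ring)
    have hx : s • z + (1 - s) • a = m := by
      simp only [smul_eq_mul, hs_def, hm_def]
      field_simp
      ring
    rw [hx] at hconv
    simp only [smul_eq_mul] at hconv
    have haff : s * (g a + t * (g b - g a)) + (1 - s) * g a
        = g a + (m - a) / (b - a) * (g b - g a) := by
      simp only [hs_def, hm_def, ht_def]
      field_simp
      ring
    have hLm : g a + (m - a) / (b - a) * (g b - g a) = (g a + g b) / 2 := by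
      simp only [hm_def]
      field_simp
      ring
    have hexp : s * (g a + t * (g b - g a) - g z)
        = s * (g a + t * (g b - g a)) - s * g z := by ring
    have hDz : s * (g a + t * (g b - g a) - g z) ≤ (g a + g b) / 2 - g m := by
      rw [hexp]; linarith [hconv, haff, hLm]
    have hX : (0:ℝ) ≤ g a + t * (g b - g a) - g z := by linarith [hsec]
    have hs2 : (0:ℝ) ≤ s - 1/2 := by linarith
    have key : 0 ≤ (s - 1/2) * (g a + t * (g b - g a) - g z) := mul_nonneg hs2 hX
    have key' : (s - 1/2) * (g a + t * (g b - g a) - g z)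
        = s * (g a + t * (g b - g a) - g z)
          - (1/2) * (g a + t * (g b - g a) - g z) := by ring
    linarith [key, key', hDz]

theorem three_point_agreement_uniform_closeness (f fstar : ℝ → ℝ)
    (hf : ConvexOn ℝ (Set.Icc (0:ℝ) 1) f)
    (hfstar : ConvexOn ℝ (Set.Icc (0:ℝ) 1) fstar)
    (a b ε : ℝ) (h0 : 0 ≤ a) (hab : a < b) (h1 : b ≤ 1)
    (hA : |f a - fstar a| < ε) (hB : |f b - fstar b| < ε)
    (hM : |f ((a + b) / 2) - fstar ((a + b) / 2)| < ε)
    (hΔ : (fstar a + fstar b) / 2 - fstar ((a + b) / 2) ≤ ε) :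
    ∀ z ∈ Set.Icc a b, |f z - fstar z| < 9 * ε := by
  intro z hz
  obtain ⟨hf1, hf2⟩ := secant_sandwich_aux f a b h0 hab h1 hf z hz
  obtain ⟨hg1, hg2⟩ := secant_sandwich_aux fstar a b h0 hab h1 hfstar z hz
  have hba : (0:ℝ) < b - a := by linarith
  set t := (z - a) / (b - a) with ht_def
  have ht0 : 0 ≤ t := div_nonneg (by linarith [hz.1]) hba.le
  have ht1 : t ≤ 1 := by rw [ht_def, div_le_one hba]; linarith [hz.2]
  rw [abs_lt] at hA hB hM ⊢
  have hεpos : 0 < ε := by linarith [hA.1, hA.2]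
  have hΔf : (f a + f b) / 2 - f ((a + b) / 2) < 3 * ε := by linarith
  have hD1 : (1 - t) * (f a - fstar a) + t * (f b - fstar b) < ε := by
    rcases le_or_gt t (1/2) with h | h
    · nlinarith [mul_nonneg ht0 (by linarith : (0:ℝ) ≤ ε - (f b - fstar b)),
        mul_nonneg (by linarith : (0:ℝ) ≤ 1 - t) (by linarith : (0:ℝ) ≤ ε - (f a - fstar a))]
    · nlinarith [mul_nonneg ht0 (by linarith : (0:ℝ) ≤ ε - (f b - fstar b)),
        mul_nonneg (by linarith : (0:ℝ) ≤ 1 - t) (by linarith : (0:ℝ) ≤ ε - (f a - fstar a))]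
  have hD2 : (1 - t) * (fstar a - f a) + t * (fstar b - f b) < ε := by
    rcases le_or_gt t (1/2) with h | h
    · nlinarith [mul_nonneg ht0 (by linarith : (0:ℝ) ≤ ε - (fstar b - f b)),
        mul_nonneg (by linarith : (0:ℝ) ≤ 1 - t) (by linarith : (0:ℝ) ≤ ε - (fstar a - f a))]
    · nlinarith [mul_nonneg ht0 (by linarith : (0:ℝ) ≤ ε - (fstar b - f b)),
        mul_nonneg (by linarith : (0:ℝ) ≤ 1 - t) (by linarith : (0:ℝ) ≤ ε - (fstar a - f a))]
  have hdiff : (f a + t * (f b - f a)) - (fstar a + t * (fstar b - fstar a))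
      = (1 - t) * (f a - fstar a) + t * (f b - fstar b) := by ring
  have hdiff' : (fstar a + t * (fstar b - fstar a)) - (f a + t * (f b - f a))
      = (1 - t) * (fstar a - f a) + t * (fstar b - f b) := by ring
  constructor
  · -- -(9ε) < f z - fstar z, i.e. fstar z - f z < 9ε
    linarith [hf2, hg1, hD2, hΔf]
  · linarith [hg2, hf1, hD1, hΔ]
end

section
/- Let f:[0,1]→ℝ be convex, suppose on an interval [x−t,x+t]⊆[0,1] with t>0 we have Δ(f,x,t) ≥ ε > 0, and fix α∈(0,1). Assume that for each u∈(x−αt, x+αt) there is a well-defined local approximation modulus ω(f,u,(1−α)ε) = min{s∈[0,min{u,1−u}] : Δ(f,u,s) ≥ (1−α)ε} > 0. Then ∫_{x−t}^{x+t} ω(f,u,(1−α)ε)^{−1} du ≥ 2α/(1+α). -/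
open MeasureTheory

private lemma chord' {f : ℝ → ℝ} (hf : ConvexOn ℝ (Set.Icc (0:ℝ) 1) f) {p q r : ℝ}
    (hp : p ∈ Set.Icc (0:ℝ) 1) (hr : r ∈ Set.Icc (0:ℝ) 1) (hpq : p ≤ q) (hqr : q ≤ r) :
    (r - p) * f q ≤ (r - q) * f p + (q - p) * f r := by
  rcases eq_or_lt_of_le (hpq.trans hqr) with h | h
  · have hqp : q = p := le_antisymm (by rw [h]; exact hqr) hpq
    subst h; subst hqp; simp
  · have hd : (0:ℝ) < r - p := sub_pos.2 h
    have ha : (0:ℝ) ≤ (r - q) / (r - p) := div_nonneg (by linarith) hd.le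
    have hb : (0:ℝ) ≤ (q - p) / (r - p) := div_nonneg (by linarith) hd.le
    have hab : (r - q) / (r - p) + (q - p) / (r - p) = 1 := by field_simp; ring
    have key := hf.2 hp hr ha hb hab
    rw [smul_eq_mul, smul_eq_mul, smul_eq_mul, smul_eq_mul] at key
    have hq : (r - q) / (r - p) * p + (q - p) / (r - p) * r = q := by field_simp; ring
    rw [hq] at key
    have h2 := mul_le_mul_of_nonneg_left key hd.le
    have h3 : (r - p) * ((r - q) / (r - p) * f p + (q - p) / (r - p) * f r)
        = (r - q) * f p + (q - p) * f r := by field_simp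
    linarith [h3 ▸ h2]

theorem inverse_modulus_integral_lower_bound (f : ℝ → ℝ)
    (hf : ConvexOn ℝ (Set.Icc (0:ℝ) 1) f)
    (x t ε α : ℝ) (ht : 0 < t)
    (hsub : Set.Icc (x - t) (x + t) ⊆ Set.Icc 0 1)
    (hε : 0 < ε) (hΔ : ε ≤ Δ f x t) (hα : α ∈ Set.Ioo (0:ℝ) 1)
    (ω : ℝ → ℝ) (hω_nonneg : ∀ u, 0 ≤ ω u)
    (hω : ∀ u ∈ Set.Ioo (x - α * t) (x + α * t),
      0 < ω u ∧
        IsLeast {s ∈ Set.Icc (0:ℝ) (min u (1 - u)) | (1 - α) * ε ≤ Δ f u s} (ω u)) :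
    ENNReal.ofReal (2 * α / (1 + α)) ≤
      ∫⁻ u in Set.Icc (x - t) (x + t), ENNReal.ofReal (ω u)⁻¹ := by
  obtain ⟨hα0, hα1⟩ := hα
  have hαtt : α * t < t := by nlinarith
  have hxt0 : 0 ≤ x - t := (hsub (Set.left_mem_Icc.2 (by linarith))).1
  have hxt1 : x + t ≤ 1 := (hsub (Set.right_mem_Icc.2 (by linarith))).2
  have hmem_xt : x - t ∈ Set.Icc (0:ℝ) 1 := ⟨hxt0, by linarith⟩
  have hmem_xt' : x + t ∈ Set.Icc (0:ℝ) 1 := ⟨by linarith, hxt1⟩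
  have hmem_x : x ∈ Set.Icc (0:ℝ) 1 := ⟨by linarith, by linarith⟩
  simp only [Δ] at hΔ
  -- key pointwise bound
  have hkey : ∀ u ∈ Set.Ioo (x - α * t) (x + α * t), ω u ≤ (1 + α) * t := by
    intro u hu
    obtain ⟨hωpos, ⟨⟨hω0, hωmin⟩, hωΔ⟩, hlb⟩ := hω u hu
    obtain ⟨hu1, hu2⟩ := hu
    set d := |u - x| with hd
    have hd1 : u - x ≤ d := le_abs_self _
    have hd2 : x - u ≤ d := by
      rw [hd, abs_sub_comm]; exact le_abs_self _
    have hd3 : d < α * t := abs_sub_lt_iff.2 ⟨by linarith, by linarith⟩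
    have hd0 : 0 ≤ d := abs_nonneg _
    by_cases hc : ω u ≤ t + d
    · linarith
    push_neg at hc
    have hs'min : t + d ≤ min u (1 - u) := le_trans hc.le hωmin
    have hsu : t + d ≤ u := hs'min.trans (min_le_left _ _)
    have hsu' : t + d ≤ 1 - u := hs'min.trans (min_le_right _ _)
    have hax : u - (t + d) ≤ x - t := by linarith
    have hbx : x + t ≤ u + (t + d) := by linarith
    have hmema : u - (t + d) ∈ Set.Icc (0:ℝ) 1 := ⟨by linarith, by linarith⟩
    have hmemb : u + (t + d) ∈ Set.Icc (0:ℝ) 1 := ⟨by linarith, by linarith⟩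
    have hga := chord' hf hmema hmem_xt' hax (by linarith)
    have hgb := chord' hf hmem_xt hmemb (by linarith) hbx
    have hgu : 2*t*(f u) ≤ 2*t*(f (x-t)) + (u-(x-t)) * (f (x+t) - f (x-t)) - 2*t*((1-α)*ε) := by
      rcases le_total u x with h | h
      · have hc1 := chord' hf hmem_xt hmem_x (by linarith : x - t ≤ u) h
        have key2 := mul_le_mul_of_nonneg_left
          (show f x ≤ (f (x-t) + f (x+t))/2 - ε by linarith)
          (show (0:ℝ) ≤ u - (x - t) by linarith)
        have key3 : (1-α)*t*ε ≤ (u-(x-t))*ε :=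
          mul_le_mul_of_nonneg_right (by linarith) hε.le
        ring_nf at hc1 key2 key3 ⊢
        linarith
      · have hc1 := chord' hf hmem_x hmem_xt' h (by linarith : u ≤ x + t)
        have key2 := mul_le_mul_of_nonneg_left
          (show f x ≤ (f (x-t) + f (x+t))/2 - ε by linarith)
          (show (0:ℝ) ≤ (x + t) - u by linarith)
        have key3 : (1-α)*t*ε ≤ ((x+t)-u)*ε :=
          mul_le_mul_of_nonneg_right (by linarith) hε.le
        ring_nf at hc1 key2 key3 ⊢
        linarith
    have h2t : (0:ℝ) < 2*t := by linarith
    have hΔs' : (1-α)*ε ≤ Δ f u (t + d) := by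
      have hmul : 2*t*((1-α)*ε) ≤ 2*t*((f (u - (t+d)) + f (u + (t+d)))/2 - f u) := by
        ring_nf at hga hgb hgu ⊢
        linarith
      have := le_of_mul_le_mul_left hmul h2t
      simpa [Δ] using this
    have : ω u ≤ t + d := hlb ⟨⟨by linarith, hs'min⟩, hΔs'⟩
    linarith
  -- integration
  have h1α : (0:ℝ) < 1 + α := by linarith
  have hsubset : Set.Ioo (x - α * t) (x + α * t) ⊆ Set.Icc (x - t) (x + t) := by
    intro u hu
    exact ⟨by linarith [hu.1], by linarith [hu.2]⟩
  have hconst : ∀ u ∈ Set.Ioo (x - α * t) (x + α * t),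
      ENNReal.ofReal (((1+α)*t)⁻¹) ≤ ENNReal.ofReal (ω u)⁻¹ := by
    intro u hu
    exact ENNReal.ofReal_le_ofReal (inv_anti₀ (hω u hu).1 (hkey u hu))
  calc ENNReal.ofReal (2 * α / (1 + α))
      = ENNReal.ofReal (((1+α)*t)⁻¹) * volume (Set.Ioo (x - α * t) (x + α * t)) := by
        rw [Real.volume_Ioo, ← ENNReal.ofReal_mul (by positivity)]
        congr 1
        field_simp
        ring
    _ = ∫⁻ _ in Set.Ioo (x - α * t) (x + α * t), ENNReal.ofReal (((1+α)*t)⁻¹) :=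
        (setLIntegral_const _ _).symm
    _ ≤ ∫⁻ u in Set.Ioo (x - α * t) (x + α * t), ENNReal.ofReal (ω u)⁻¹ :=
        lintegral_mono_ae ((ae_restrict_mem measurableSet_Ioo).mono hconst)
    _ ≤ ∫⁻ u in Set.Icc (x - t) (x + t), ENNReal.ofReal (ω u)⁻¹ :=
        lintegral_mono_set hsubset
end

section
/- Let f:[0,1]→ℝ be convex and suppose Δ(f, [u−s, u+s]) ≤ 2ε for some interval [u−s,u+s]⊆[0,1] obtained from [x−t,x+t] with Δ(f,[x−t,x+t]) = ε, where u = x+τ·t for τ∈[0,1] and s=(1−τ)t (so [u−s,u+s]⊆[x−t,x+t] sharing right endpoint x+t). Then Δ(f,[u−s,u+s]) ≤ 2·Δ(f,[x−t,x+t]). -/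
theorem shared_endpoint_delta_comparison (f : ℝ → ℝ)
    (hf : ConvexOn ℝ (Set.Icc (0:ℝ) 1) f)
    (x t ε τ : ℝ) (ht : 0 < t)
    (hsub : Set.Icc (x - t) (x + t) ⊆ Set.Icc 0 1)
    (hτ : τ ∈ Set.Icc (0:ℝ) 1)
    (hΔ : Δ f x t = ε) :
    Δ f (x + τ * t) ((1 - τ) * t) ≤ 2 * Δ f x t := by
  obtain ⟨hτ0, hτ1⟩ := hτ
  have ha : x - t ∈ Set.Icc (0:ℝ) 1 := hsub ⟨le_refl _, by linarith⟩
  have hb : x + t ∈ Set.Icc (0:ℝ) 1 := hsub ⟨by linarith, le_refl _⟩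
  have hu : x + τ * t ∈ Set.Icc (0:ℝ) 1 := by
    apply hsub
    constructor <;> nlinarith
  have h1 : f ((1-τ) • (x-t) + τ • (x+t)) ≤ (1-τ) * f (x-t) + τ * f (x+t) :=
    hf.2 ha hb (by linarith) hτ0 (by ring)
  have h2 : f ((τ/(1+τ)) • (x-t) + (1/(1+τ)) • (x+τ*t)) ≤
      (τ/(1+τ)) * f (x-t) + (1/(1+τ)) * f (x+τ*t) :=
    hf.2 ha hu (by positivity) (by positivity) (by field_simp; ring)
  have h3 : f ((1/2:ℝ) • (x-t) + (1/2:ℝ) • (x+t)) ≤ (1/2) * f (x-t) + (1/2) * f (x+t) :=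
    hf.2 ha hb (by norm_num) (by norm_num) (by norm_num)
  simp only [smul_eq_mul] at h1 h2 h3
  have e1 : (1-τ) * (x-t) + τ * (x+t) = x + τ*t - (1-τ)*t := by ring
  have e2 : (τ/(1+τ)) * (x-t) + (1/(1+τ)) * (x+τ*t) = x := by
    field_simp; ring
  have e3 : (1/2:ℝ) * (x-t) + (1/2:ℝ) * (x+t) = x := by ring
  rw [e1] at h1
  rw [e2] at h2
  rw [e3] at h3
  -- multiply h2 by (1+τ)
  have hτpos : (0:ℝ) < 1 + τ := by linarith
  have h2' : (1+τ) * f x ≤ τ * f (x-t) + f (x+τ*t) := by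
    have := mul_le_mul_of_nonneg_left h2 (le_of_lt hτpos)
    field_simp at this
    linarith
  have h4 : 0 ≤ (1-τ) * ((f (x-t) + f (x+t)) / 2 - f x) := by
    apply mul_nonneg (by linarith)
    linarith
  have e4 : x + τ*t + (1-τ)*t = x + t := by ring
  simp only [Δ, e4]
  nlinarith [h1, h2', h3, h4]
end
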